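/- arXiv:2307.03251 — 2 statements merged into one kernel-verified Lean document; each statement's English description precedes it below -/
import Mathlib

section
/- If a > 0, b > 0, c > 0 and c² ≥ 4ab, the Rössler system has exactly two equilibria when c² > 4ab and exactly one when c² = 4ab. -/
theorem rossler_equilibria_count (a b c : ℝ) (ha : 0 < a) (hb : 0 < b) (hc : 0 < c)
    (h : c ^ 2 ≥ 4 * a * b) :
    (c ^ 2 > 4 * a * b →
      {p : ℝ × ℝ × ℝ | -p.2.1 - p.2.2 = 0 ∧ p.1 + a * p.2.1 = 0 ∧
        b + p.1 * p.2.2 - c * p.2.2 = 0}.ncard = 2) ∧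
    (c ^ 2 = 4 * a * b →
      {p : ℝ × ℝ × ℝ | -p.2.1 - p.2.2 = 0 ∧ p.1 + a * p.2.1 = 0 ∧
        b + p.1 * p.2.2 - c * p.2.2 = 0}.ncard = 1) := by
  set s := Real.sqrt (c ^ 2 - 4 * a * b) with hsdef
  have hs2 : discrim a (-c) b = s * s := by
    rw [discrim, hsdef, Real.mul_self_sqrt (by linarith)]; ring
  have ha0 : a ≠ 0 := ne_of_gt ha
  have hinj : Function.Injective (fun z : ℝ => ((a * z, -z, z) : ℝ × ℝ × ℝ)) :=
    fun z1 z2 hz => congrArg (fun p : ℝ × ℝ × ℝ => p.2.2) hz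
  have key : {p : ℝ × ℝ × ℝ | -p.2.1 - p.2.2 = 0 ∧ p.1 + a * p.2.1 = 0 ∧
      b + p.1 * p.2.2 - c * p.2.2 = 0} =
      (fun z : ℝ => ((a * z, -z, z) : ℝ × ℝ × ℝ)) ''
        {z : ℝ | a * z ^ 2 + (-c) * z + b = 0} := by
    ext ⟨x, y, z⟩
    simp only [Set.mem_setOf_eq, Set.mem_image, Prod.mk.injEq]
    constructor
    · rintro ⟨h1, h2, h3⟩
      have hy : y = -z := by linarith
      have hx : x = a * z := by rw [hy] at h2; linarith
      refine ⟨z, ?_, hx.symm, hy.symm, rfl⟩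
      rw [hx] at h3; nlinarith [h3]
    · rintro ⟨z', hz', hx, hy, hz⟩
      subst hz; subst hx; subst hy
      refine ⟨by ring, by ring, by nlinarith [hz']⟩
  have hroots : {z : ℝ | a * z ^ 2 + (-c) * z + b = 0} =
      {(c + s) / (2 * a), (c - s) / (2 * a)} := by
    ext z
    rw [Set.mem_setOf_eq, show a * z ^ 2 + (-c) * z + b = a * (z * z) + (-c) * z + b by ring,
      quadratic_eq_zero_iff ha0 hs2 z]
    simp [neg_neg, Set.mem_insert_iff, Set.mem_singleton_iff]
  constructor
  · intro hgt
    have hspos : 0 < s := Real.sqrt_pos.mpr (by linarith)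
    have hne : (c + s) / (2 * a) ≠ (c - s) / (2 * a) := by
      intro heq
      rw [div_eq_div_iff (by positivity) (by positivity)] at heq
      nlinarith
    rw [key, Set.ncard_image_of_injective _ hinj, hroots, Set.ncard_pair hne]
  · intro heq
    have hs0 : s = 0 := by rw [hsdef, heq]; simp
    rw [key, Set.ncard_image_of_injective _ hinj, hroots, hs0]
    simp
end

section
/- For n > m and ψ ∈ (0,1), the coefficient E_{ψ,m} = h^{ψ+1}·((N+1)^ψ(N+2+ψ) - N^ψ(N+2+2ψ))/(ψ(ψ+1)) with N = n - m and h > 0 is positive. -/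
theorem adams_coefficient_pos (h ψ : ℝ) (hh : 0 < h) (hψ : ψ ∈ Set.Ioo (0:ℝ) 1)
    (n m : ℕ) (hnm : m < n) :
    0 < h ^ (ψ + 1) *
      (((n - m : ℝ) + 1) ^ ψ * ((n - m : ℝ) + 2 + ψ) -
        ((n - m : ℝ)) ^ ψ * ((n - m : ℝ) + 2 + 2 * ψ)) / (ψ * (ψ + 1)) := by
  obtain ⟨hψ0, hψ1⟩ := hψ
  set N : ℝ := (n : ℝ) - m with hN
  have hN1 : (1 : ℝ) ≤ N := by
    have : (m : ℝ) + 1 ≤ n := by exact_mod_cast Nat.succ_le_of_lt hnm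
    simp [hN]; linarith
  have hN0 : (0 : ℝ) < N := lt_of_lt_of_le one_pos hN1
  -- Bernoulli: (1 + 1/N)^(ψ+1) ≥ 1 + (ψ+1)/N
  have hbern : 1 + (ψ + 1) * (1 / N) ≤ (1 + 1 / N) ^ (ψ + 1) :=
    one_add_mul_self_le_rpow_one_add (by have := one_div_pos.mpr hN0; linarith) (by linarith)
  have hmul : (N * (1 + 1 / N)) ^ (ψ + 1) = N ^ (ψ + 1) * (1 + 1 / N) ^ (ψ + 1) :=
    Real.mul_rpow (le_of_lt hN0) (by positivity)
  have hNe : N * (1 + 1 / N) = N + 1 := by field_simp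
  have hsplit : N ^ (ψ + 1) = N ^ ψ * N := by
    rw [Real.rpow_add hN0, Real.rpow_one]
  have hsplit1 : (N + 1) ^ (ψ + 1) = (N + 1) ^ ψ * (N + 1) := by
    rw [Real.rpow_add (by linarith), Real.rpow_one]
  have hA : N ^ (ψ + 1) + (ψ + 1) * N ^ ψ ≤ (N + 1) ^ (ψ + 1) := by
    have h1 : N ^ (ψ + 1) * (1 + (ψ + 1) * (1 / N)) ≤ (N + 1) ^ (ψ + 1) := by
      rw [← hNe, hmul]
      exact mul_le_mul_of_nonneg_left hbern (by positivity)
    have h2 : N ^ (ψ + 1) * (1 + (ψ + 1) * (1 / N))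
        = N ^ (ψ + 1) + (ψ + 1) * N ^ ψ := by
      rw [hsplit]; field_simp
    linarith [h1, h2.symm.le]
  have hB : N ^ ψ < (N + 1) ^ ψ :=
    Real.rpow_lt_rpow (le_of_lt hN0) (by linarith) hψ0
  have hnum : 0 < (N + 1) ^ ψ * (N + 2 + ψ) - N ^ ψ * (N + 2 + 2 * ψ) := by
    nlinarith [hA, hB, hsplit, hsplit1]
  have hh1 : 0 < h ^ (ψ + 1) := Real.rpow_pos_of_pos hh _
  have hd : 0 < ψ * (ψ + 1) := by nlinarith
  exact div_pos (mul_pos hh1 hnum) hd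
end
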